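/- Let h, g : (0, ∞) → [0, ∞) be functions and suppose there is s₁ > 0 such that for all 0 < s ≤ s₁ one has h(s/3) ≤ g(s)² and s ≤ g(s), and suppose g(s) → 0 as s → 0⁺. Then for every ε > 0 there exists s > 0 such that h(s) < 10·g(s)² and g(s) ≤ ε. -/

import Mathlib

open scoped Topology

/-- The Exercise in Appendix A: the real-analysis core of the chopping procedure. -/
theorem chopping_exercise
    (h g : ℝ → ℝ) (hh : ∀ s > (0 : ℝ), 0 ≤ h s) (hgnn : ∀ s > (0 : ℝ), 0 ≤ g s)
    (s₁ : ℝ) (hs₁ : 0 < s₁)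
    (H : ∀ s : ℝ, 0 < s → s ≤ s₁ → h (s / 3) ≤ (g s) ^ 2 ∧ s ≤ g s)
    (hlim : Filter.Tendsto g (𝓝[>] (0 : ℝ)) (𝓝 0)) :
    ∀ ε > (0 : ℝ), ∃ s > (0 : ℝ), h s < 10 * (g s) ^ 2 ∧ g s ≤ ε := by
  intro ε hε
  by_contra hcon
  push_neg at hcon
  obtain ⟨δ, hδ, hδ'⟩ := Metric.tendsto_nhdsWithin_nhds.mp hlim ε hε
  set m : ℝ := min δ s₁ / 3 with hm
  have hm0 : 0 < m := by positivity
  have hmδ : m < δ := by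
    have h1 : min δ s₁ ≤ δ := min_le_left _ _
    have : m ≤ δ / 3 := by rw [hm]; linarith
    linarith
  have hms₁ : 3 * m ≤ s₁ := by
    have : min δ s₁ ≤ s₁ := min_le_right _ _
    linarith [this]
  clear_value m
  clear hm
  -- for any 0 < t ≤ m, g t ≤ ε
  have hgε : ∀ t : ℝ, 0 < t → t ≤ m → g t ≤ ε := by
    intro t ht htm
    have := hδ' (by exact ht) (by
      simp only [Real.dist_eq, sub_zero]
      rw [abs_of_pos ht]; linarith)
    simp only [Real.dist_eq, sub_zero] at this
    have := (abs_le.mp this.le).2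
    linarith [le_abs_self (g t)]
  -- for any 0 < t ≤ m, 10 * g t ^ 2 ≤ h t
  have hkey : ∀ t : ℝ, 0 < t → t ≤ m → 10 * (g t) ^ 2 ≤ h t := by
    intro t ht htm
    by_contra hlt
    push_neg at hlt
    exact absurd (hgε t ht htm) (not_le.mpr (hcon t ht hlt))
  -- induction: g m ^ 2 ≥ 10^n * g (m / 3^n) ^ 2
  have hiter : ∀ n : ℕ, 10 ^ n * (g (m / 3 ^ n)) ^ 2 ≤ (g m) ^ 2 := by
    intro n
    induction n with
    | zero => simp
    | succ n ih =>
      have h3n : (0:ℝ) < 3 ^ n := by positivity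
      have hpos : 0 < m / 3 ^ n := by positivity
      have hpos' : 0 < m / 3 ^ (n+1) := by positivity
      have hle : m / 3 ^ (n+1) ≤ m := by
        rw [div_le_iff₀ (by positivity)]
        nlinarith [(one_le_pow₀ (by norm_num : (1:ℝ) ≤ 3) : (1:ℝ) ≤ 3 ^ (n+1))]
      have hs : m / 3 ^ n ≤ s₁ := by
        have : m / 3 ^ n ≤ m := by
          rw [div_le_iff₀ h3n]
          nlinarith [(one_le_pow₀ (by norm_num : (1:ℝ) ≤ 3) : (1:ℝ) ≤ 3 ^ n)]
        linarith
      have hH := (H (m / 3 ^ n) hpos hs).1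
      have heq : m / 3 ^ n / 3 = m / 3 ^ (n+1) := by
        rw [div_div]; ring_nf
      rw [heq] at hH
      have h10 := hkey (m / 3 ^ (n+1)) hpos' hle
      calc 10 ^ (n+1) * (g (m / 3 ^ (n+1))) ^ 2
          = 10 ^ n * (10 * (g (m / 3 ^ (n+1))) ^ 2) := by ring
        _ ≤ 10 ^ n * h (m / 3 ^ (n+1)) := by
            apply mul_le_mul_of_nonneg_left h10 (by positivity)
        _ ≤ 10 ^ n * (g (m / 3 ^ n)) ^ 2 := by
            apply mul_le_mul_of_nonneg_left hH (by positivity)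
        _ ≤ (g m) ^ 2 := ih
  -- lower bound: g (m / 3^n) ≥ m / 3^n, so g m ^ 2 ≥ m^2 * (10/9)^n
  have hlow : ∀ n : ℕ, m ^ 2 * (10 / 9) ^ n ≤ (g m) ^ 2 := by
    intro n
    have h3n : (0:ℝ) < 3 ^ n := by positivity
    have hpos : 0 < m / 3 ^ n := by positivity
    have hs : m / 3 ^ n ≤ s₁ := by
      have : m / 3 ^ n ≤ m := by
        rw [div_le_iff₀ h3n]
        nlinarith [(one_le_pow₀ (by norm_num : (1:ℝ) ≤ 3) : (1:ℝ) ≤ 3 ^ n)]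
      linarith
    have hg := (H (m / 3 ^ n) hpos hs).2
    have hsq : (m / 3 ^ n) ^ 2 ≤ (g (m / 3 ^ n)) ^ 2 :=
      pow_le_pow_left₀ hpos.le hg 2
    have := hiter n
    have h9 : ((3:ℝ) ^ n) ^ 2 = 9 ^ n := by
      rw [← pow_mul, mul_comm, pow_mul]; norm_num
    have hcalc : m ^ 2 * (10 / 9) ^ n = 10 ^ n * (m / 3 ^ n) ^ 2 := by
      rw [div_pow m, h9]
      field_simp
      rw [← mul_pow]; norm_num
    rw [hcalc]
    calc 10 ^ n * (m / 3 ^ n) ^ 2 ≤ 10 ^ n * (g (m / 3 ^ n)) ^ 2 := by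
          apply mul_le_mul_of_nonneg_left hsq (by positivity)
      _ ≤ (g m) ^ 2 := this
  -- contradiction: (10/9)^n → ∞
  obtain ⟨n, hn⟩ := pow_unbounded_of_one_lt ((g m) ^ 2 / m ^ 2) (by norm_num : (1:ℝ) < 10 / 9)
  have := hlow n
  have hm2 : 0 < m ^ 2 := by positivity
  rw [div_lt_iff₀ hm2] at hn
  nlinarith
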